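/- Let K be a field with nonzero weights for distinct labels i, j, k. Assume b_ij(T)/b_ij(S) = b_kj(T)/b_kj(S). Then γ_jk b_jk(S) c_ik(T) = τ_ij τ_jk γ_ji c_ik(S) b_jk(T) + τ_ij β_jk γ_ji c_ij(S) c_jk(T) is equivalent to β_ij = (τ_ik·(γ_ij/γ_ik) - γ_kj·(τ_ij/τ_kj)) · b_ij(S)c_kj(T)/(c_ki(S)c_ij(T)), after the relabeling used in the paper (Lemma on condition reformulation, second condition). -/

import Mathlib

set_option maxHeartbeats 1000000


/-- Reformulation of the second extra solvability condition in terms of β_ij. -/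
theorem stmt8 {K : Type*} [Field K]
    (ajS ajT bijS bijT bkjS bkjT bikS bikT : K)
    (cijS cijT cjiS cjiT cikS cikT ckiS ckiT ckjS ckjT cjkS cjkT : K)
    (hajS : ajS ≠ 0) (hajT : ajT ≠ 0)
    (hbijS : bijS ≠ 0) (hbijT : bijT ≠ 0) (hbkjS : bkjS ≠ 0) (hbkjT : bkjT ≠ 0)
    (hbikS : bikS ≠ 0) (hbikT : bikT ≠ 0)
    (hcijS : cijS ≠ 0) (hcijT : cijT ≠ 0) (hcjiS : cjiS ≠ 0) (hcjiT : cjiT ≠ 0)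
    (hcikS : cikS ≠ 0) (hcikT : cikT ≠ 0) (hckiS : ckiS ≠ 0) (hckiT : ckiT ≠ 0)
    (hckjS : ckjS ≠ 0) (hckjT : ckjT ≠ 0) (hcjkS : cjkS ≠ 0) (hcjkT : cjkT ≠ 0)
    (βij γij γik γkj τij τik τki τkj : K)
    (hβij : βij = (ajT * bijS - ajS * bijT) / (cijS * cjiT))
    (hγij : γij = bijT * cjiS / (bijS * cjiT))
    (hγik : γik = bikT * ckiS / (bikS * ckiT))
    (hγkj : γkj = bkjT * cjkS / (bkjS * cjkT))
    (hτij : τij = cijT * cjiS / (cijS * cjiT))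
    (hτik : τik = cikT * ckiS / (cikS * ckiT))
    (hτki : τki = ckiT * cikS / (ckiS * cikT))
    (hτkj : τkj = ckjT * cjkS / (ckjS * cjkT))
    (hγikne : γik ≠ 0) (hτkjne : τkj ≠ 0)
    (hb : bijT / bijS = bkjT / bkjS) :
    (γij * bijS * ckjT = τki * τij * γik * ckjS * bijT + τki * βij * γik * ckiS * cijT) ↔
      βij = (τik * (γij / γik) - γkj * (τij / τkj)) * (bijS * ckjT / (ckiS * cijT)) := by
  subst hβij hγij hγik hγkj hτij hτik hτki hτkj
  clear hγikne hτkjne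
  rw [div_eq_div_iff hbijS hbkjS] at hb
  have hDL : (bijS * cjiT) ≠ 0 := mul_ne_zero hbijS hcjiT
  have hDR : (ckiS*cikT*(cijS*cjiT)*(bikS*ckiT)) ≠ 0 := by
    apply_rules [mul_ne_zero]
  have hD2L : (cijS * cjiT) ≠ 0 := mul_ne_zero hcijS hcjiT
  have hD2R : ((cikS*ckiT*bijS*cjiT*bikT*ckiS) * (bkjS*cjkT*cijS*cjiT*ckjT*cjkS) * (ckiS*cijT)) ≠ 0 := by
    apply_rules [mul_ne_zero]
  have hMne : (ckiT*ckiS*bijS*cjiT) ≠ 0 := by apply_rules [mul_ne_zero]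
  have hL1 : bijT * cjiS / (bijS * cjiT) * bijS * ckjT
      = (bijT * cjiS * bijS * ckjT) / (bijS * cjiT) := by ring
  have hR1 : ckiT * cikS / (ckiS * cikT) * (cijT * cjiS / (cijS * cjiT)) * (bikT * ckiS / (bikS * ckiT)) * ckjS * bijT +
        ckiT * cikS / (ckiS * cikT) * ((ajT * bijS - ajS * bijT) / (cijS * cjiT)) * (bikT * ckiS / (bikS * ckiT)) *
            ckiS *
          cijT
      = (ckiT*cikS*(cijT*cjiS)*(bikT*ckiS)*ckjS*bijT
          + ckiT*cikS*(ajT*bijS-ajS*bijT)*(bikT*ckiS)*ckiS*cijT) / (ckiS*cikT*(cijS*cjiT)*(bikS*ckiT)) := by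
    field_simp
  have hR2 : (cikT * ckiS / (cikS * ckiT) * (bijT * cjiS / (bijS * cjiT) / (bikT * ckiS / (bikS * ckiT))) -
          bkjT * cjkS / (bkjS * cjkT) * (cijT * cjiS / (cijS * cjiT) / (ckjT * cjkS / (ckjS * cjkT)))) *
        (bijS * ckjT / (ckiS * cijT))
      = ((cikT*ckiS*(bijT*cjiS)*(bikS*ckiT)) * (bkjS*cjkT*cijS*cjiT*ckjT*cjkS)
          - (bkjT*cjkS*(cijT*cjiS)*(ckjS*cjkT)) * (cikS*ckiT*bijS*cjiT*bikT*ckiS)) * (bijS*ckjT)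
        / ((cikS*ckiT*bijS*cjiT*bikT*ckiS) * (bkjS*cjkT*cijS*cjiT*ckjT*cjkS) * (ckiS*cijT)) := by
    have hB1 : (cikS*ckiT*bijS*cjiT*bikT*ckiS) ≠ 0 := by apply_rules [mul_ne_zero]
    have hB2 : (bkjS*cjkT*cijS*cjiT*ckjT*cjkS) ≠ 0 := by apply_rules [mul_ne_zero]
    rw [show cikT * ckiS / (cikS * ckiT) * (bijT * cjiS / (bijS * cjiT) / (bikT * ckiS / (bikS * ckiT)))
        = (cikT*ckiS*(bijT*cjiS)*(bikS*ckiT)) / (cikS*ckiT*bijS*cjiT*bikT*ckiS) from by field_simp,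
      show bkjT * cjkS / (bkjS * cjkT) * (cijT * cjiS / (cijS * cjiT) / (ckjT * cjkS / (ckjS * cjkT)))
        = (bkjT*cjkS*(cijT*cjiS)*(ckjS*cjkT)) / (bkjS*cjkT*cijS*cjiT*ckjT*cjkS) from by field_simp,
      div_sub_div _ _ hB1 hB2, div_mul_div_comm]
    ring
  rw [hL1, hR1, hR2, div_eq_div_iff hDL hDR, div_eq_div_iff hD2L hD2R]
  constructor <;> intro h
  · have h2 : bijT*cjiS*ckjT*cikT*cijS*bikS
        = cikS*cijT*cjiS*bikT*ckjS*bijT + cikS*(ajT*bijS-ajS*bijT)*bikT*ckiS*cijT :=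
      mul_left_cancel₀ hMne (by linear_combination h)
    linear_combination (-(ckiT*cjiT*cjkT*cjkS*ckiS*bijS*cjiT*cijS*ckjT*bkjS)) * h2
      - (ckiT*cjiT*cjkT*cjkS*ckiS*bijS*cjiT*cijS*ckjT*cjiS*cijT*ckjS*cikS*bikT) * hb
  · have hmne : (ckiT*cjiT*cjkT*cjkS*ckiS*bijS*cjiT*cijS*ckjT*bkjS) ≠ 0 := by
      apply_rules [mul_ne_zero]
    have h3 : bijT*cjiS*ckjT*cikT*cijS*bikS
        = cikS*cijT*cjiS*bikT*ckjS*bijT + cikS*(ajT*bijS-ajS*bijT)*bikT*ckiS*cijT :=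
      mul_left_cancel₀ hmne (by linear_combination (-1 : K) * h
        - (ckiT*cjiT*cjkT*cjkS*ckiS*bijS*cjiT*cijS*ckjT*cjiS*cijT*ckjS*cikS*bikT) * hb)
    linear_combination (ckiT*ckiS*bijS*cjiT) * h3
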